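/- If the tree G is a line, then every extreme rule on G is Pareto efficient on any domain D of strict preferences: at no profile P is there an alternative a with a P_i f^ℓ(P) for all agents i. -/
import Mathlib


open SimpleGraph

/-- `z` lies on a path from `x` to `y` in `G` (in a tree, the unique path). -/
def pathSet {X : Type*} (G : SimpleGraph X) (x y z : X) : Prop :=
  ∃ p : G.Walk x y, p.IsPath ∧ z ∈ p.support

/-- The path hull `H(S)`: union of paths between pairs of nodes of `S`. -/
def hull {X : Type*} (G : SimpleGraph X) (S : Set X) (z : X) : Prop :=
  ∃ x ∈ S, ∃ y ∈ S, pathSet G x y z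

/-- `m` is a distance minimizer of `x` on the path hull of `S`. -/
def isMinimizer {X : Type*} (G : SimpleGraph X) (x : X) (S : Set X) (m : X) : Prop :=
  hull G S m ∧ ∀ y, hull G S y → G.dist x m ≤ G.dist x y

/-- `ℓ` is a leaf: it has exactly one neighbor. -/
def isLeaf {X : Type*} (G : SimpleGraph X) (ℓ : X) : Prop := ∃! x, G.Adj ℓ x

/-- `t` is the top-ranked alternative of the strict preference `P`. -/
def isTop {X : Type*} (P : X → X → Prop) (t : X) : Prop := ∀ y, y ≠ t → P t y

/-- `P` with peak `t` is single-peaked on the tree `G`. -/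
def singlePeakedAt {X : Type*} (G : SimpleGraph X) (P : X → X → Prop) (t : X) : Prop :=
  ∀ a b, a ≠ b → pathSet G t a b → P b a

theorem extreme_rule_on_line_efficient {X : Type*} [Fintype X] [DecidableEq X]
    (G : SimpleGraph X) [DecidableRel G.Adj] (hG : G.IsTree)
    (hline : ∀ v : X, G.degree v ≤ 2)
    (ℓ : X) (hℓ : isLeaf G ℓ)
    (n : ℕ) (hn : 0 < n)
    (P : Fin n → (X → X → Prop)) (hP : ∀ i, IsStrictTotalOrder X (P i))
    (t : Fin n → X) (ht : ∀ i, isTop (P i) (t i))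
    (c : X) (hc : isMinimizer G ℓ (Set.range t) c) :
    ¬ ∃ a : X, ∀ i, P i a c := by
  rintro ⟨a, ha⟩
  -- First: it suffices to show c is some agent's top.
  have key : ∀ k : Fin n, c ≠ t k := by
    intro k hk
    have h1 : P k a c := ha k
    have hac : a ≠ c := by
      rintro rfl; exact (hP k).irrefl a h1
    have h2 : P k (t k) a := ht k a (hk ▸ hac)
    exact (hP k).irrefl a ((hP k).trans _ _ _ h1 (hk ▸ h2))
  obtain ⟨⟨x0, hx0, y0, hy0, p, hp, hcp⟩, hmin⟩ := hc
  obtain ⟨i, rfl⟩ := hx0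
  obtain ⟨j, rfl⟩ := hy0
  -- c is interior on p : Walk (t i) (t j)
  have hcx : c ≠ t i := key i
  have hcy : c ≠ t j := key j
  -- split p at c
  have hspec := p.take_spec hcp
  set q1 := p.takeUntil c hcp with hq1
  set q2 := p.dropUntil c hcp with hq2
  have hq1p : q1.IsPath := hp.takeUntil hcp
  have hq2p : q2.IsPath := hp.dropUntil hcp
  -- u : neighbor of c within q1
  obtain ⟨u, hadj_u, q1', hq1r⟩ := Walk.exists_eq_cons_of_ne hcx q1.reverse
  -- w : neighbor of c within q2
  obtain ⟨w, hadj_w, q2', hq2r⟩ := Walk.exists_eq_cons_of_ne hcy q2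
  have hadj_cu : G.Adj c u := hadj_u
  have hadj_cw : G.Adj c w := hadj_w
  have huq1 : u ∈ q1.support := by
    have : u ∈ q1.reverse.support := by rw [hq1r]; simp
    simpa using this
  have hwq2 : w ∈ q2.support := by rw [hq2r]; simp
  have huw : u ≠ w := by
    rintro rfl
    -- u ∈ q1.support and u ∈ q2.support.tail, contradicting nodup of p.support
    have hwne : u ≠ c := hadj_cu.ne'
    have hwtail : u ∈ q2.support.tail := by
      have hs := q2.support_eq_cons
      rw [hs] at hwq2
      rcases List.mem_cons.mp hwq2 with h | h
      · exact absurd h hwne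
      · exact h
    have hnodup : (q1.support ++ q2.support.tail).Nodup := by
      rw [← Walk.support_append, hspec]; exact hp.support_nodup
    exact (List.disjoint_of_nodup_append hnodup) huq1 hwtail
  -- neighbors of c are exactly {u, w}
  have hsub : ({u, w} : Finset X) ⊆ G.neighborFinset c := by
    intro z hz
    rw [SimpleGraph.mem_neighborFinset]
    rcases Finset.mem_insert.mp hz with rfl | hz
    · exact hadj_cu
    · rw [Finset.mem_singleton.mp hz]; exact hadj_cw
  have hcard : ({u, w} : Finset X).card = 2 := Finset.card_pair huw
  have hnbr : G.neighborFinset c = {u, w} := by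
    apply (Finset.eq_of_subset_of_card_le hsub ?_).symm
    rw [hcard]; exact hline c
  -- c ≠ ℓ since ℓ has a unique neighbor
  have hcl : c ≠ ℓ := by
    rintro rfl
    obtain ⟨z, -, hz⟩ := hℓ
    exact huw ((hz u hadj_cu).trans (hz w hadj_cw).symm)
  -- shortest walk from ℓ to c
  have hreach : G.Reachable ℓ c := hG.isConnected ℓ c
  obtain ⟨q, hqlen⟩ := hreach.exists_walk_length_eq_dist
  have hdpos : 0 < G.dist ℓ c := hreach.pos_dist_of_ne (Ne.symm hcl)
  obtain ⟨x, hadj_cx, q', hqr⟩ := Walk.exists_eq_cons_of_ne hcl q.reverse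
  have hq'len : q'.length = G.dist ℓ c - 1 := by
    have : q.reverse.length = G.dist ℓ c := by rw [Walk.length_reverse, hqlen]
    rw [hqr] at this; simp at this; omega
  have hdx : G.dist ℓ x ≤ G.dist ℓ c - 1 := by
    have := SimpleGraph.dist_le q'.reverse
    rwa [Walk.length_reverse, hq'len] at this
  -- x is a neighbor of c, hence u or w, hence in the hull
  have hx_mem : x ∈ ({u, w} : Finset X) := by
    rw [← hnbr, SimpleGraph.mem_neighborFinset]; exact hadj_cx
  have hx_hull : hull G (Set.range t) x := by
    refine ⟨t i, ⟨i, rfl⟩, t j, ⟨j, rfl⟩, p, hp, ?_⟩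
    rcases Finset.mem_insert.mp hx_mem with rfl | hx
    · exact Walk.support_takeUntil_subset p hcp huq1
    · rw [Finset.mem_singleton.mp hx]
      exact Walk.support_dropUntil_subset p hcp hwq2
  have := hmin x hx_hull
  omega
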